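/- Let (m̂_n) be a sequence of random variables converging to m̂ with E[m̂] = m, and let T be a nonnegative integer-valued random variable independent of (m̂_n) with β_n = P(T ≥ n) > 0 for all n. If the sum Σ_n (m̂_{n+1} − m̂_n)·1_{T≥n}/β_n converges absolutely in L^1, then the randomised estimator Ẑ = Σ_{n=0}^T (m̂_{n+1} − m̂_n)/β_n satisfies E[Ẑ] = m. -/

import Mathlib

open MeasureTheory ProbabilityTheory
open scoped ENNReal NNReal

/-- Debiasing via random truncation (Rhee–Glynn / McLeish): let `(m̂_n)` (with `m̂_0 = 0`)
converge a.e. to an integrable `m̂` with `E[m̂] = m`, and let `T` be a nonnegative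
integer-valued random variable independent of the sequence, with `β_n = P(T ≥ n) > 0`.
If `Σ_n (m̂_{n+1} − m̂_n)·1_{T ≥ n}/β_n` converges absolutely in `L¹`, then the randomised
estimator `Ẑ = Σ_{n=0}^T (m̂_{n+1} − m̂_n)/β_n` satisfies `E[Ẑ] = m`. -/
theorem stmt_10 {Ω : Type*} [MeasureSpace Ω] [IsProbabilityMeasure (ℙ : Measure Ω)]
    (mh : ℕ → Ω → ℝ) (hmeas : ∀ n, Measurable (mh n)) (h0 : mh 0 = fun _ => 0)
    (mlim : Ω → ℝ) (hlimmeas : Measurable mlim) (hint : Integrable mlim ℙ)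
    (hconv : ∀ᵐ ω ∂ℙ, Filter.Tendsto (fun n => mh n ω) Filter.atTop (nhds (mlim ω)))
    (T : Ω → ℕ) (hT : Measurable T)
    (β : ℕ → ℝ) (hβ : ∀ n, β n = (ℙ {ω | n ≤ T ω}).toReal) (hβpos : ∀ n, 0 < β n)
    (hindep : IndepFun T (fun ω => fun n => mh n ω) ℙ)
    (hL1 : ∑' n : ℕ,
        (∫⁻ ω in {ω | n ≤ T ω}, ENNReal.ofReal (|mh (n+1) ω - mh n ω| / β n) ∂ℙ) ≠ ⊤) :
    ∫ ω, (∑ n ∈ Finset.range (T ω + 1), (mh (n+1) ω - mh n ω) / β n) ∂ℙ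
      = ∫ ω, mlim ω ∂ℙ := by
  classical
  set Δ : ℕ → Ω → ℝ := fun n ω => mh (n+1) ω - mh n ω with hΔdef
  have hΔmeas : ∀ n, Measurable (Δ n) := fun n => (hmeas (n+1)).sub (hmeas n)
  set A : ℕ → Set Ω := fun n => {ω | n ≤ T ω} with hAdef
  have hAmeas : ∀ n, MeasurableSet (A n) := fun n => hT measurableSet_Ici
  have hseqmeas : Measurable (fun ω => fun n => mh n ω) :=
    measurable_pi_lambda _ (fun n => hmeas n)
  have hPA : ∀ n, (ℙ : Measure Ω) (A n) = ENNReal.ofReal (β n) := by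
    intro n
    rw [hβ n, ENNReal.ofReal_toReal (measure_ne_top _ _)]
  set L : ℕ → ℝ≥0∞ := fun n => ∫⁻ ω, ENNReal.ofReal |Δ n ω| ∂ℙ with hLdef
  -- key lintegral identity via independence
  have key : ∀ n, (∫⁻ ω in A n, ENNReal.ofReal (|Δ n ω| / β n) ∂ℙ) = L n := by
    intro n
    have hφ : Measurable (fun m : ℕ => if n ≤ m then (1:ℝ≥0∞) else 0) :=
      Measurable.of_discrete
    have hψ : Measurable (fun g : ℕ → ℝ => ENNReal.ofReal |g (n+1) - g n|) :=
      (((measurable_pi_apply (n+1)).sub (measurable_pi_apply n)).abs).ennreal_ofReal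
    have hind := hindep.comp hφ hψ
    have step1 : (∫⁻ ω in A n, ENNReal.ofReal |Δ n ω| ∂ℙ)
        = (ℙ : Measure Ω) (A n) * L n := by
      rw [← lintegral_indicator (hAmeas n)]
      have heq : (A n).indicator (fun ω => ENNReal.ofReal |Δ n ω|)
          = (((fun m : ℕ => if n ≤ m then (1:ℝ≥0∞) else 0) ∘ T)
            * ((fun g : ℕ → ℝ => ENNReal.ofReal |g (n+1) - g n|) ∘ (fun ω n => mh n ω))) := by
        funext ω
        by_cases h : n ≤ T ω <;>
          simp [hAdef, Set.indicator, h, hΔdef]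
      rw [heq, lintegral_mul_eq_lintegral_mul_lintegral_of_indepFun
        (hφ.comp hT) (hψ.comp hseqmeas) hind]
      congr 1
      have : ((fun m : ℕ => if n ≤ m then (1:ℝ≥0∞) else 0) ∘ T)
          = (A n).indicator (fun _ => (1:ℝ≥0∞)) := by
        funext ω; by_cases h : n ≤ T ω <;> simp [hAdef, Set.indicator, h]
      rw [this]; exact lintegral_indicator_one (hAmeas n)
    have hdiv : ∀ ω, ENNReal.ofReal (|Δ n ω| / β n)
        = ENNReal.ofReal |Δ n ω| * ENNReal.ofReal (β n)⁻¹ := by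
      intro ω
      rw [div_eq_mul_inv, ENNReal.ofReal_mul (abs_nonneg _)]
    calc (∫⁻ ω in A n, ENNReal.ofReal (|Δ n ω| / β n) ∂ℙ)
        = (∫⁻ ω in A n, ENNReal.ofReal |Δ n ω| * ENNReal.ofReal (β n)⁻¹ ∂ℙ) := by
          simp_rw [hdiv]
      _ = (∫⁻ ω in A n, ENNReal.ofReal |Δ n ω| ∂ℙ) * ENNReal.ofReal (β n)⁻¹ :=
          lintegral_mul_const _ ((hΔmeas n).abs.ennreal_ofReal)
      _ = ((ℙ : Measure Ω) (A n) * ENNReal.ofReal (β n)⁻¹) * L n := by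
          rw [step1]; ring
      _ = L n := by
          rw [hPA n, ← ENNReal.ofReal_mul (hβpos n).le,
            mul_inv_cancel₀ (hβpos n).ne', ENNReal.ofReal_one, one_mul]
  have hL1' : ∑' n, L n ≠ ⊤ := by
    rw [← tsum_congr key]; exact hL1
  have hLlt : ∀ n, L n < ⊤ := fun n => ENNReal.lt_top_of_tsum_ne_top hL1' n
  have hΔnorm : ∀ n ω, (‖Δ n ω‖₊ : ℝ≥0∞) = ENNReal.ofReal |Δ n ω| := fun n ω =>
    Real.enorm_eq_ofReal_abs _
  have hΔint : ∀ n, Integrable (Δ n) ℙ := by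
    intro n
    refine ⟨(hΔmeas n).aestronglyMeasurable, ?_⟩
    rw [hasFiniteIntegral_iff_norm]
    simpa [Real.norm_eq_abs] using hLlt n
  -- Bochner integral identity via independence
  set g : ℕ → Ω → ℝ := fun n => (A n).indicator (fun ω => Δ n ω / β n) with hgdef
  have hgmeas : ∀ n, Measurable (g n) := fun n =>
    (((hΔmeas n)).div_const _).indicator (hAmeas n)
  have hgint : ∀ n, ∫ ω, g n ω ∂ℙ = ∫ ω, Δ n ω ∂ℙ := by
    intro n
    have hφ : Measurable (fun m : ℕ => if n ≤ m then (1:ℝ) else 0) :=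
      Measurable.of_discrete
    have hψ : Measurable (fun gg : ℕ → ℝ => gg (n+1) - gg n) :=
      (measurable_pi_apply _).sub (measurable_pi_apply _)
    have hind := hindep.comp hφ hψ
    have hXeq : ((fun m : ℕ => if n ≤ m then (1:ℝ) else 0) ∘ T)
        = (A n).indicator (fun _ => (1:ℝ)) := by
      funext ω; by_cases h : n ≤ T ω <;> simp [hAdef, Set.indicator, h]
    have hXint : Integrable ((A n).indicator (fun _ => (1:ℝ))) ℙ :=
      (integrable_const (1:ℝ)).indicator (hAmeas n)
    have hmul := IndepFun.integral_mul_eq_mul_integral hind (hXeq ▸ hXint).aestronglyMeasurable (hΔint n).aestronglyMeasurable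
    have hYeq : ((fun gg : ℕ → ℝ => gg (n+1) - gg n) ∘ (fun ω n => mh n ω)) = Δ n := rfl
    rw [hXeq, hYeq] at hmul
    have hgω : g n = fun ω => ((A n).indicator (fun _ => (1:ℝ)) ω * Δ n ω) * (β n)⁻¹ := by
      funext ω
      by_cases h : ω ∈ A n <;> simp [hgdef, Set.indicator, h, div_eq_mul_inv]
    rw [hgω, integral_mul_const]
    have h1 : ∫ ω, (A n).indicator (fun _ => (1:ℝ)) ω * Δ n ω ∂ℙ
        = (∫ ω, (A n).indicator (fun _ => (1:ℝ)) ω ∂ℙ) * ∫ ω, Δ n ω ∂ℙ := hmul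
    rw [h1]; rw [show (∫ ω, (A n).indicator (fun _ => (1:ℝ)) ω ∂ℙ) = (ℙ (A n)).toReal from integral_indicator_one (hAmeas n), ← hβ n]
    exact mul_div_cancel_left₀ _ (hβpos n).ne'
  -- nnnorm lintegral of g n
  have hgnorm : ∀ n, (∫⁻ ω, (‖g n ω‖₊ : ℝ≥0∞) ∂ℙ)
      = ∫⁻ ω in A n, ENNReal.ofReal (|Δ n ω| / β n) ∂ℙ := by
    intro n
    rw [← lintegral_indicator (hAmeas n)]
    congr 1
    funext ω
    by_cases h : ω ∈ A n
    · simp only [hgdef, Set.indicator_of_mem h]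
      rw [← enorm_eq_nnnorm, Real.enorm_eq_ofReal_abs, abs_div, abs_of_pos (hβpos n)]
    · simp [hgdef, Set.indicator_of_notMem h]
  -- a.e. summability and identification of the limit
  have hsum_ae : ∀ᵐ ω ∂ℙ, Summable (fun n => Δ n ω) := by
    have hmeastsum : Measurable (fun ω => ∑' n, ENNReal.ofReal |Δ n ω|) :=
      Measurable.ennreal_tsum (fun n => (hΔmeas n).abs.ennreal_ofReal)
    have hlt : ∫⁻ ω, ∑' n, ENNReal.ofReal |Δ n ω| ∂ℙ ≠ ⊤ := by
      rw [lintegral_tsum (fun n => ((hΔmeas n).abs.ennreal_ofReal).aemeasurable)]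
      exact hL1'
    filter_upwards [ae_lt_top hmeastsum hlt] with ω hω
    have : (∑' n, (‖Δ n ω‖₊ : ℝ≥0∞)) ≠ ⊤ := by
      simp_rw [hΔnorm]; exact hω.ne
    exact Summable.of_nnnorm (ENNReal.tsum_coe_ne_top_iff_summable.1 this)
  have haemlim : ∀ᵐ ω ∂ℙ, (∑' n, Δ n ω) = mlim ω := by
    filter_upwards [hconv, hsum_ae] with ω hω hsum
    have h1 : Filter.Tendsto (fun N => ∑ n ∈ Finset.range N, Δ n ω)
        Filter.atTop (nhds (∑' n, Δ n ω)) := hsum.hasSum.tendsto_sum_nat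
    have h2 : ∀ N, ∑ n ∈ Finset.range N, Δ n ω = mh N ω := by
      intro N
      rw [Finset.sum_range_sub (f := fun n => mh n ω)]
      simp [h0]
    simp_rw [h2] at h1
    exact tendsto_nhds_unique h1 hω
  -- put it all together
  have hZeq : ∀ ω, (∑ n ∈ Finset.range (T ω + 1), (mh (n+1) ω - mh n ω) / β n)
      = ∑' n, g n ω := by
    intro ω
    have hzero : ∀ n ∉ Finset.range (T ω + 1), g n ω = 0 := by
      intro n hn
      have : ¬ n ≤ T ω := by
        simpa [Nat.lt_succ_iff] using hn
      exact Set.indicator_of_notMem (by simpa [hAdef] using this) _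
    rw [tsum_eq_sum hzero]
    refine Finset.sum_congr rfl fun n hn => ?_
    have hmem : ω ∈ A n := by
      simp only [Finset.mem_range, Nat.lt_succ_iff] at hn
      simpa [hAdef] using hn
    rw [hgdef]
    simp [Set.indicator_of_mem hmem, hΔdef]
  calc ∫ ω, (∑ n ∈ Finset.range (T ω + 1), (mh (n+1) ω - mh n ω) / β n) ∂ℙ
      = ∫ ω, ∑' n, g n ω ∂ℙ := by
        exact integral_congr_ae (Filter.Eventually.of_forall hZeq)
    _ = ∑' n, ∫ ω, g n ω ∂ℙ := by
        refine integral_tsum (fun n => (hgmeas n).aestronglyMeasurable) ?_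
        rw [show (∑' i, ∫⁻ a, ‖g i a‖ₑ ∂ℙ) = ∑' n, (∫⁻ ω, (‖g n ω‖₊ : ℝ≥0∞) ∂ℙ) from rfl, tsum_congr hgnorm, tsum_congr key]
        exact hL1'
    _ = ∑' n, ∫ ω, Δ n ω ∂ℙ := tsum_congr hgint
    _ = ∫ ω, ∑' n, Δ n ω ∂ℙ := by
        refine (integral_tsum (fun n => (hΔmeas n).aestronglyMeasurable) ?_).symm
        simp_rw [Real.enorm_eq_ofReal_abs]
        exact hL1'
    _ = ∫ ω, mlim ω ∂ℙ := integral_congr_ae haemlim
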